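/- Let (Ω,Σ) and (Ω',Σ') be standard Borel spaces, A a POVM on (Ω,Σ), B a POVM on (Ω',Σ'), and M an extreme POVM on (Ω̄,Σ̄). If ran A ∪ ran B ⊆ ran M, then A and B are jointly measurable. -/

import Mathlib

open scoped InnerProductSpace
open MeasureTheory

/-- A positive-operator-valued measure (normalized, defined on all sets, vanishing on
non-measurable sets). -/
structure POVM (Ω : Type*) [MeasurableSpace Ω]
    (H : Type*) [NormedAddCommGroup H] [InnerProductSpace ℂ H] [CompleteSpace H] where
  toFun : Set Ω → (H →L[ℂ] H)
  isPositive' : ∀ s, (toFun s).IsPositive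
  empty' : toFun ∅ = 0
  total' : toFun Set.univ = 1
  not_measurable' : ∀ s, ¬ MeasurableSet s → toFun s = 0
  m_iUnion' : ∀ f : ℕ → Set Ω, (∀ n, MeasurableSet (f n)) → Pairwise (Function.onFun Disjoint f) →
    ∀ x : H, HasSum (fun n => toFun (f n) x) (toFun (⋃ n, f n) x)

variable {Ω Ω' Ωb : Type*} [MeasurableSpace Ω] [MeasurableSpace Ω'] [MeasurableSpace Ωb]
variable {H : Type*} [NormedAddCommGroup H] [InnerProductSpace ℂ H] [CompleteSpace H]


/-- Sharp observable: a projection-valued measure. -/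
def POVM.IsSharp (P : POVM Ω H) : Prop := ∀ s, IsIdempotentElem (P.toFun s)

/-- A POVM is discrete if it is concentrated on a countable set of points. -/
def POVM.Discrete (A : POVM Ω H) : Prop :=
  ∃ D : Set Ω, D.Countable ∧ ∀ s, MeasurableSet s → s ∩ D = ∅ → A.toFun s = 0

/-- Extremality in the convex set of POVMs on `(Ω, Σ)`. -/
def POVM.Extreme (A : POVM Ω H) : Prop :=
  ∀ (A₁ A₂ : POVM Ω H) (t : ℝ), 0 < t → t < 1 →
    (∀ s, A.toFun s = (t : ℂ) • A₁.toFun s + ((1 - t : ℝ) : ℂ) • A₂.toFun s) →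
    A₁.toFun = A.toFun ∧ A₂.toFun = A.toFun

/-- Joint measurability: a POVM on the product σ-algebra having `A` and `B` as marginals. -/
def JointlyMeasurable (A : POVM Ω H) (B : POVM Ω' H) : Prop :=
  ∃ N : POVM (Ω × Ω') H,
    (∀ X, MeasurableSet X → N.toFun (X ×ˢ Set.univ) = A.toFun X) ∧
    (∀ Y, MeasurableSet Y → N.toFun (Set.univ ×ˢ Y) = B.toFun Y)

/-- `ran A ⊆ ran M`. -/
def RanSubset (A : POVM Ω H) (M : POVM Ωb H) : Prop :=
  ∀ X, MeasurableSet X → ∃ Z, MeasurableSet Z ∧ M.toFun Z = A.toFun X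

/-- Coexistence: a common mother observable on some measurable space contains both ranges. -/
def Coexistent (A : POVM Ω H) (B : POVM Ω' H) : Prop :=
  ∃ (Ωm : Type) (_ : MeasurableSpace Ωm) (M : POVM Ωm H), RanSubset A M ∧ RanSubset B M

namespace POVM

/-- the real continuous linear functional `x ↦ re ⟪φ, x⟫`. -/
noncomputable def reInner (φ : H) : H →L[ℝ] ℝ :=
  Complex.reCLM.comp ((innerSL ℂ φ).restrictScalars ℝ)

@[simp] lemma reInner_apply (φ x : H) : reInner φ x = Complex.re ⟪φ, x⟫_ℂ := rfl

lemma hasSum_reInner (A : POVM Ω H) {f : ℕ → Set Ω} (hf : ∀ n, MeasurableSet (f n))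
    (hd : Pairwise (Function.onFun Disjoint f)) (φ : H) :
    HasSum (fun n => Complex.re ⟪φ, A.toFun (f n) φ⟫_ℂ)
      (Complex.re ⟪φ, A.toFun (⋃ n, f n) φ⟫_ℂ) :=
  (reInner φ).hasSum (A.m_iUnion' f hf hd φ)

lemma re_inner_nonneg (A : POVM Ω H) (s : Set Ω) (φ : H) :
    0 ≤ Complex.re ⟪φ, A.toFun s φ⟫_ℂ :=
  (A.isPositive' s).re_inner_nonneg_right φ

/-- the scalar measure `⟪φ, A(·) φ⟫`. -/
noncomputable def measure (A : POVM Ω H) (φ : H) : Measure Ω :=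
  Measure.ofMeasurable (fun s _ => ENNReal.ofReal (Complex.re ⟪φ, A.toFun s φ⟫_ℂ))
    (by simp [A.empty'])
    (by
      intro f hf hd
      have h := A.hasSum_reInner hf hd φ
      rw [← h.tsum_eq]
      exact ENNReal.ofReal_tsum_of_nonneg (fun n => A.re_inner_nonneg _ φ) h.summable)

lemma measure_apply (A : POVM Ω H) (φ : H) {s : Set Ω} (hs : MeasurableSet s) :
    A.measure φ s = ENNReal.ofReal (Complex.re ⟪φ, A.toFun s φ⟫_ℂ) :=
  Measure.ofMeasurable_apply s hs

instance (A : POVM Ω H) (φ : H) : IsFiniteMeasure (A.measure φ) :=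
  ⟨by rw [A.measure_apply φ MeasurableSet.univ]; exact ENNReal.ofReal_lt_top⟩

lemma inner_real (A : POVM Ω H) (s : Set Ω) (φ : H) :
    ⟪φ, A.toFun s φ⟫_ℂ = (Complex.re ⟪φ, A.toFun s φ⟫_ℂ : ℝ) := by
  have hsa := (A.isPositive' s).isSelfAdjoint
  have h1 : ⟪A.toFun s φ, φ⟫_ℂ = ⟪φ, A.toFun s φ⟫_ℂ := by
    conv_lhs => rw [← hsa.adjoint_eq]
    exact ContinuousLinearMap.adjoint_inner_left _ _ _
  have h2 : (starRingEnd ℂ) ⟪φ, A.toFun s φ⟫_ℂ = ⟪φ, A.toFun s φ⟫_ℂ := by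
    rw [inner_conj_symm]; exact h1
  exact ((Complex.conj_eq_iff_re).1 h2).symm

/-- operator equality from equality of all the scalar measures. -/
lemma toFun_eq_of_measure {A : POVM Ω H} {B : POVM Ω' H} {s : Set Ω} {t : Set Ω'}
    (hs : MeasurableSet s) (ht : MeasurableSet t)
    (h : ∀ φ, A.measure φ s = B.measure φ t) : A.toFun s = B.toFun t := by
  have key : ∀ φ : H, ⟪φ, A.toFun s φ⟫_ℂ = ⟪φ, B.toFun t φ⟫_ℂ := by
    intro φ
    have := h φ
    rw [A.measure_apply φ hs, B.measure_apply φ ht] at this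
    have hre : Complex.re ⟪φ, A.toFun s φ⟫_ℂ = Complex.re ⟪φ, B.toFun t φ⟫_ℂ := by
      have := (ENNReal.ofReal_eq_ofReal_iff (A.re_inner_nonneg s φ)
        (B.re_inner_nonneg t φ)).1 this
      exact this
    rw [A.inner_real, B.inner_real, hre]
  have : ∀ φ : H, ⟪(A.toFun s : H →ₗ[ℂ] H) φ, φ⟫_ℂ = ⟪(B.toFun t : H →ₗ[ℂ] H) φ, φ⟫_ℂ := by
    intro φ
    have := key φ
    simp only [ContinuousLinearMap.coe_coe]
    rw [← inner_conj_symm ((A.toFun s) φ) φ, ← inner_conj_symm ((B.toFun t) φ) φ, this]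
  have h2 := (ext_inner_map (V := H) (A.toFun s : H →ₗ[ℂ] H) (B.toFun t : H →ₗ[ℂ] H)).1 this
  exact ContinuousLinearMap.coe_injective h2

lemma toFun_null_of_measure {A : POVM Ω H} {s : Set Ω} (hs : MeasurableSet s)
    (h : ∀ φ, A.measure φ s = 0) : A.toFun s = 0 := by
  have := toFun_eq_of_measure (B := A) hs MeasurableSet.empty (fun φ => by
    rw [h φ, A.measure_apply φ MeasurableSet.empty, A.empty']; simp)
  rw [this, A.empty']

lemma measure_of_null {A : POVM Ω H} {s : Set Ω} (h : A.toFun s = 0)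
    (hs : MeasurableSet s) (φ : H) : A.measure φ s = 0 := by
  rw [A.measure_apply φ hs, h]; simp

end POVM
set_option linter.unusedSectionVars false

namespace POVM

lemma add_of_disjoint (A : POVM Ω H) {s t : Set Ω} (hs : MeasurableSet s)
    (ht : MeasurableSet t) (hd : Disjoint s t) :
    A.toFun (s ∪ t) = A.toFun s + A.toFun t := by
  ext x
  set f : ℕ → Set Ω := fun n => if n = 0 then s else if n = 1 then t else ∅ with hf
  have hmeas : ∀ n, MeasurableSet (f n) := by
    intro n
    simp only [f]
    split_ifs <;> first | exact hs | exact ht | exact MeasurableSet.empty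
  have hpd : Pairwise (Function.onFun Disjoint f) := by
    intro i j hij
    simp only [Function.onFun, f]
    match i, j with
    | 0, 0 => exact absurd rfl hij
    | 0, 1 => simpa using hd
    | 0, (n+2) => simp
    | 1, 0 => simpa using hd.symm
    | 1, 1 => exact absurd rfl hij
    | 1, (n+2) => simp
    | (n+2), j => simp
  have hU : (⋃ n, f n) = s ∪ t := by
    ext y
    simp only [Set.mem_iUnion, Set.mem_union, f]
    constructor
    · rintro ⟨n, hn⟩
      match n with
      | 0 => exact Or.inl (by simpa using hn)
      | 1 => exact Or.inr (by simpa using hn)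
      | (n+2) => simp at hn
    · rintro (hy | hy)
      · exact ⟨0, by simpa using hy⟩
      · exact ⟨1, by simpa using hy⟩
  have hsum := A.m_iUnion' f hmeas hpd x
  rw [hU] at hsum
  have hfin : HasSum (fun n => A.toFun (f n) x) (A.toFun s x + A.toFun t x) := by
    have h01 : ∀ n ∉ ({0, 1} : Finset ℕ), A.toFun (f n) x = 0 := by
      intro n hn
      match n with
      | 0 => simp at hn
      | 1 => simp at hn
      | (n+2) => simp [f, A.empty']
    have : HasSum (fun n => A.toFun (f n) x) (∑ n ∈ ({0, 1} : Finset ℕ), A.toFun (f n) x) :=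
      hasSum_sum_of_ne_finset_zero h01
    have hval : ∑ n ∈ ({0, 1} : Finset ℕ), A.toFun (f n) x
        = A.toFun s x + A.toFun t x := by
      rw [Finset.sum_pair (by norm_num)]
      simp [f]
    rwa [hval] at this
  exact hsum.unique hfin

lemma null_mono (A : POVM Ω H) {s t : Set Ω} (hs : MeasurableSet s) (ht : MeasurableSet t)
    (hst : s ⊆ t) (h : A.toFun t = 0) : A.toFun s = 0 :=
  toFun_null_of_measure hs fun φ =>
    le_antisymm ((measure_mono hst).trans_eq (measure_of_null h ht φ)) zero_le

lemma isPositive_smul_ofReal {T : H →L[ℂ] H} (hT : T.IsPositive) {r : ℝ} (hr : 0 ≤ r) :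
    ((r : ℂ) • T).IsPositive := by
  constructor
  · exact (IsSelfAdjoint.smul (Complex.conj_ofReal r : IsSelfAdjoint (r : ℂ)) hT.isSelfAdjoint).isSymmetric
  · intro x
    rw [ContinuousLinearMap.reApplyInnerSelf, ContinuousLinearMap.smul_apply,
      inner_smul_left]
    simp only [Complex.conj_ofReal]
    have h2 := hT.re_inner_nonneg_left x
    simp only [RCLike.re_to_complex] at h2 ⊢
    rw [Complex.re_ofReal_mul]
    exact mul_nonneg hr h2

end POVM
namespace POVM

open scoped Classical in
/-- Perturbation of `M` by a signed combination supported on `E`, `F`, `G`. -/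
noncomputable def pert (M : POVM Ωb H) (E F G : Set Ωb) (a b c : ℝ) :
    Set Ωb → (H →L[ℂ] H) := fun Z =>
  if MeasurableSet Z then
    M.toFun Z + ((a : ℂ) • M.toFun (Z ∩ E) + (b : ℂ) • M.toFun (Z ∩ F)
      + (c : ℂ) • M.toFun (Z ∩ G))
  else 0

lemma add_of_disjoint4 (A : POVM Ω H) {s t u v : Set Ω} (hs : MeasurableSet s)
    (ht : MeasurableSet t) (hu : MeasurableSet u) (hv : MeasurableSet v)
    (hst : Disjoint s t) (hsu : Disjoint s u) (hsv : Disjoint s v)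
    (htu : Disjoint t u) (htv : Disjoint t v) (huv : Disjoint u v) :
    A.toFun (s ∪ t ∪ u ∪ v) = A.toFun s + A.toFun t + A.toFun u + A.toFun v := by
  rw [A.add_of_disjoint ((hs.union ht).union hu) hv
      ((hsv.union_left htv).union_left huv),
    A.add_of_disjoint (hs.union ht) hu (hsu.union_left htu),
    A.add_of_disjoint hs ht hst]

lemma pert_exists (M : POVM Ωb H) {E F G : Set Ωb} (hE : MeasurableSet E)
    (hF : MeasurableSet F) (hG : MeasurableSet G) (hEF : Disjoint E F)
    (hEG : Disjoint E G) (hFG : Disjoint F G) {a b c : ℝ}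
    (ha : |a| ≤ 1) (hb : |b| ≤ 1) (hc : |c| ≤ 1)
    (htot : (a : ℂ) • M.toFun E + (b : ℂ) • M.toFun F + (c : ℂ) • M.toFun G = 0) :
    ∃ P : POVM Ωb H, P.toFun = M.pert E F G a b c := by
  classical
  have hdecomp : ∀ Z : Set Ωb, MeasurableSet Z →
      M.toFun Z = M.toFun (Z \ (E ∪ F ∪ G)) + M.toFun (Z ∩ E) + M.toFun (Z ∩ F)
        + M.toFun (Z ∩ G) := by
    intro Z hZ
    have hset : Z = (Z \ (E ∪ F ∪ G)) ∪ (Z ∩ E) ∪ (Z ∩ F) ∪ (Z ∩ G) := by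
      ext x
      by_cases hxE : x ∈ E <;> by_cases hxF : x ∈ F <;> by_cases hxG : x ∈ G <;>
        simp [Set.mem_diff, Set.mem_union, hxE, hxF, hxG] <;> tauto
    have hd1 : Disjoint (Z \ (E ∪ F ∪ G)) (Z ∩ E) :=
      Set.disjoint_left.2 fun x hx hx' => hx.2 (Or.inl (Or.inl hx'.2))
    have hd2 : Disjoint (Z \ (E ∪ F ∪ G)) (Z ∩ F) :=
      Set.disjoint_left.2 fun x hx hx' => hx.2 (Or.inl (Or.inr hx'.2))
    have hd3 : Disjoint (Z \ (E ∪ F ∪ G)) (Z ∩ G) :=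
      Set.disjoint_left.2 fun x hx hx' => hx.2 (Or.inr hx'.2)
    conv_lhs => rw [hset]
    exact M.add_of_disjoint4 (hZ.diff ((hE.union hF).union hG)) (hZ.inter hE)
      (hZ.inter hF) (hZ.inter hG) hd1 hd2 hd3
      (hEF.mono Set.inter_subset_right Set.inter_subset_right)
      (hEG.mono Set.inter_subset_right Set.inter_subset_right)
      (hFG.mono Set.inter_subset_right Set.inter_subset_right)
  refine ⟨⟨M.pert E F G a b c, ?_, ?_, ?_, ?_, ?_⟩, rfl⟩
  · -- positivity
    intro Z
    by_cases hZ : MeasurableSet Z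
    · rw [pert, if_pos hZ]
      have : M.toFun Z + ((a : ℂ) • M.toFun (Z ∩ E) + (b : ℂ) • M.toFun (Z ∩ F)
          + (c : ℂ) • M.toFun (Z ∩ G))
          = M.toFun (Z \ (E ∪ F ∪ G)) + (((1 + a : ℝ) : ℂ) • M.toFun (Z ∩ E)
            + ((1 + b : ℝ) : ℂ) • M.toFun (Z ∩ F) + ((1 + c : ℝ) : ℂ) • M.toFun (Z ∩ G)) := by
        rw [hdecomp Z hZ]
        push_cast
        module
      rw [this]
      have h1 := abs_le.1 ha
      have h2 := abs_le.1 hb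
      have h3 := abs_le.1 hc
      exact (M.isPositive' _).add
        (((isPositive_smul_ofReal (M.isPositive' _) (by linarith)).add
          (isPositive_smul_ofReal (M.isPositive' _) (by linarith))).add
          (isPositive_smul_ofReal (M.isPositive' _) (by linarith)))
    · rw [pert, if_neg hZ]; exact ContinuousLinearMap.isPositive_zero
  · -- empty
    simp [pert, M.empty']
  · -- total
    rw [pert, if_pos MeasurableSet.univ]
    simp only [Set.univ_inter]
    rw [htot, add_zero, M.total']
  · -- not measurable
    intro s hs
    rw [pert, if_neg hs]
  · -- iUnion
    intro f hf hd x
    have hU : MeasurableSet (⋃ n, f n) := MeasurableSet.iUnion hf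
    have key : ∀ (W : Set Ωb), MeasurableSet W → (r : ℝ) →
        HasSum (fun n => ((r : ℂ) • M.toFun (f n ∩ W)) x)
          (((r : ℂ) • M.toFun ((⋃ n, f n) ∩ W)) x) := by
      intro W hW r
      have := (M.m_iUnion' (fun n => f n ∩ W) (fun n => (hf n).inter hW)
        (fun i j hij => (hd hij).mono (Set.inter_subset_left) (Set.inter_subset_left)) x)
      rw [← Set.iUnion_inter] at *
      simpa [ContinuousLinearMap.smul_apply] using this.const_smul ((r : ℂ))
    have base := M.m_iUnion' f hf hd x
    have total := base.add (((key E hE a).add (key F hF b)).add (key G hG c))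
    have : (fun n => (M.pert E F G a b c (f n)) x)
        = fun n => M.toFun (f n) x + (((a : ℂ) • M.toFun (f n ∩ E)) x
          + ((b : ℂ) • M.toFun (f n ∩ F)) x + ((c : ℂ) • M.toFun (f n ∩ G)) x) := by
      funext n
      rw [pert, if_pos (hf n)]
      simp [ContinuousLinearMap.add_apply]
    rw [this, pert, if_pos hU]
    simpa [ContinuousLinearMap.add_apply] using total

lemma extreme_pert (M : POVM Ωb H) (hext : M.Extreme) {E F G : Set Ωb}
    (hE : MeasurableSet E) (hF : MeasurableSet F) (hG : MeasurableSet G)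
    (hEF : Disjoint E F) (hEG : Disjoint E G) (hFG : Disjoint F G) {a b c : ℝ}
    (ha : |a| ≤ 1) (hb : |b| ≤ 1) (hc : |c| ≤ 1)
    (htot : (a : ℂ) • M.toFun E + (b : ℂ) • M.toFun F + (c : ℂ) • M.toFun G = 0) :
    ∀ Z, MeasurableSet Z →
      (a : ℂ) • M.toFun (Z ∩ E) + (b : ℂ) • M.toFun (Z ∩ F)
        + (c : ℂ) • M.toFun (Z ∩ G) = 0 := by
  classical
  obtain ⟨P₁, hP₁⟩ := M.pert_exists hE hF hG hEF hEG hFG ha hb hc htot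
  have htot' : ((-a : ℝ) : ℂ) • M.toFun E + ((-b : ℝ) : ℂ) • M.toFun F
      + ((-c : ℝ) : ℂ) • M.toFun G = 0 := by
    push_cast
    rw [neg_smul, neg_smul, neg_smul, ← neg_add, ← neg_add, htot, neg_zero]
  obtain ⟨P₂, hP₂⟩ := M.pert_exists hE hF hG hEF hEG hFG
    (by rwa [abs_neg]) (by rwa [abs_neg]) (by rwa [abs_neg]) htot'
  have hcomb : ∀ s, M.toFun s = ((1/2 : ℝ) : ℂ) • P₁.toFun s
      + ((1 - (1/2 : ℝ) : ℝ) : ℂ) • P₂.toFun s := by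
    intro s
    rw [hP₁, hP₂]
    by_cases hs : MeasurableSet s
    · rw [pert, pert, if_pos hs, if_pos hs]
      push_cast
      norm_num
      module
    · rw [pert, pert, if_neg hs, if_neg hs, M.not_measurable' s hs]
      simp
  obtain ⟨h1, -⟩ := hext P₁ P₂ (1/2) (by norm_num) (by norm_num) hcomb
  intro Z hZ
  have := congrFun h1 Z
  rw [hP₁, pert, if_pos hZ] at this
  exact (add_eq_left).1 this

end POVM
namespace POVM

set_option maxHeartbeats 1000000 in
lemma extreme_null (M : POVM Ωb H) (hext : M.Extreme) {S₁ S₂ S₃ : Set Ωb}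
    (h1 : MeasurableSet S₁) (h2 : MeasurableSet S₂) (h3 : MeasurableSet S₃)
    (heq : M.toFun S₁ + M.toFun S₂ = M.toFun S₃) : M.toFun (S₁ \ S₃) = 0 := by
  set x111 := S₁ ∩ S₂ ∩ S₃ with hx111
  set x110 := S₁ ∩ S₂ ∩ S₃ᶜ with hx110
  set x101 := S₁ ∩ S₂ᶜ ∩ S₃ with hx101
  set x100 := S₁ ∩ S₂ᶜ ∩ S₃ᶜ with hx100
  set x011 := S₁ᶜ ∩ S₂ ∩ S₃ with hx011
  set x010 := S₁ᶜ ∩ S₂ ∩ S₃ᶜ with hx010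
  set x001 := S₁ᶜ ∩ S₂ᶜ ∩ S₃ with hx001
  have m111 : MeasurableSet x111 := (h1.inter h2).inter h3
  have m110 : MeasurableSet x110 := (h1.inter h2).inter h3.compl
  have m101 : MeasurableSet x101 := (h1.inter h2.compl).inter h3
  have m100 : MeasurableSet x100 := (h1.inter h2.compl).inter h3.compl
  have m011 : MeasurableSet x011 := (h1.compl.inter h2).inter h3
  have m010 : MeasurableSet x010 := (h1.compl.inter h2).inter h3.compl
  have m001 : MeasurableSet x001 := (h1.compl.inter h2.compl).inter h3
  have dis : ∀ {u v w u' v' w' : Set Ωb}, (u ∩ v ∩ w) ∩ (u' ∩ v' ∩ w') = ∅ →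
      Disjoint (u ∩ v ∩ w) (u' ∩ v' ∩ w') := fun h =>
    Set.disjoint_iff_inter_eq_empty.2 h
  -- decompositions
  have hS1 : M.toFun S₁ = M.toFun x111 + M.toFun x110 + M.toFun x101 + M.toFun x100 := by
    have hset : S₁ = x111 ∪ x110 ∪ x101 ∪ x100 := by
      ext x
      simp only [hx111, hx110, hx101, hx100, Set.mem_union, Set.mem_inter_iff,
        Set.mem_compl_iff]
      by_cases hx1 : x ∈ S₁ <;> by_cases hx2 : x ∈ S₂ <;> by_cases hx3 : x ∈ S₃ <;>
        simp [hx1, hx2, hx3]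
    conv_lhs => rw [hset]
    refine M.add_of_disjoint4 m111 m110 m101 m100 ?_ ?_ ?_ ?_ ?_ ?_ <;>
      · refine Set.disjoint_left.2 fun x hx hx' => ?_
        simp only [hx111, hx110, hx101, hx100, Set.mem_inter_iff, Set.mem_compl_iff] at hx hx'
        tauto
  have hS2 : M.toFun S₂ = M.toFun x111 + M.toFun x110 + M.toFun x011 + M.toFun x010 := by
    have hset : S₂ = x111 ∪ x110 ∪ x011 ∪ x010 := by
      ext x
      simp only [hx111, hx110, hx011, hx010, Set.mem_union, Set.mem_inter_iff,
        Set.mem_compl_iff]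
      by_cases hx1 : x ∈ S₁ <;> by_cases hx2 : x ∈ S₂ <;> by_cases hx3 : x ∈ S₃ <;>
        simp [hx1, hx2, hx3]
    conv_lhs => rw [hset]
    refine M.add_of_disjoint4 m111 m110 m011 m010 ?_ ?_ ?_ ?_ ?_ ?_ <;>
      · refine Set.disjoint_left.2 fun x hx hx' => ?_
        simp only [hx111, hx110, hx011, hx010, Set.mem_inter_iff, Set.mem_compl_iff] at hx hx'
        tauto
  have hS3 : M.toFun S₃ = M.toFun x111 + M.toFun x101 + M.toFun x011 + M.toFun x001 := by
    have hset : S₃ = x111 ∪ x101 ∪ x011 ∪ x001 := by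
      ext x
      simp only [hx111, hx101, hx011, hx001, Set.mem_union, Set.mem_inter_iff,
        Set.mem_compl_iff]
      by_cases hx1 : x ∈ S₁ <;> by_cases hx2 : x ∈ S₂ <;> by_cases hx3 : x ∈ S₃ <;>
        simp [hx1, hx2, hx3]
    conv_lhs => rw [hset]
    refine M.add_of_disjoint4 m111 m101 m011 m001 ?_ ?_ ?_ ?_ ?_ ?_ <;>
      · refine Set.disjoint_left.2 fun x hx hx' => ?_
        simp only [hx111, hx101, hx011, hx001, Set.mem_inter_iff, Set.mem_compl_iff] at hx hx'
        tauto
  have mF : MeasurableSet (x100 ∪ x010 ∪ x111) := (m100.union m010).union m111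
  have dEF : Disjoint x110 (x100 ∪ x010 ∪ x111) := by
    refine Set.disjoint_left.2 fun x hx hx' => ?_
    simp only [hx110, hx100, hx010, hx111, Set.mem_union, Set.mem_inter_iff,
      Set.mem_compl_iff] at hx hx'
    tauto
  have dEG : Disjoint x110 x001 := by
    refine Set.disjoint_left.2 fun x hx hx' => ?_
    simp only [hx110, hx001, Set.mem_inter_iff, Set.mem_compl_iff] at hx hx'
    tauto
  have dFG : Disjoint (x100 ∪ x010 ∪ x111) x001 := by
    refine Set.disjoint_left.2 fun x hx hx' => ?_
    simp only [hx100, hx010, hx111, hx001, Set.mem_union, Set.mem_inter_iff,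
      Set.mem_compl_iff] at hx hx'
    tauto
  have d2 : Disjoint x100 x010 := by
    refine Set.disjoint_left.2 fun x hx hx' => ?_
    simp only [hx100, hx010, Set.mem_inter_iff, Set.mem_compl_iff] at hx hx'
    tauto
  have d1 : Disjoint (x100 ∪ x010) x111 := by
    refine Set.disjoint_left.2 fun x hx hx' => ?_
    simp only [hx100, hx010, hx111, Set.mem_union, Set.mem_inter_iff,
      Set.mem_compl_iff] at hx hx'
    tauto
  have hFval : M.toFun (x100 ∪ x010 ∪ x111)
      = M.toFun x100 + M.toFun x010 + M.toFun x111 := by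
    rw [M.add_of_disjoint (m100.union m010) m111 d1, M.add_of_disjoint m100 m010 d2]
  have htot : ((1 : ℝ) : ℂ) • M.toFun x110 + ((1/2 : ℝ) : ℂ) • M.toFun (x100 ∪ x010 ∪ x111)
      + ((-(1/2) : ℝ) : ℂ) • M.toFun x001 = 0 := by
    rw [hFval]
    have heq' : M.toFun x111 + M.toFun x110 + M.toFun x101 + M.toFun x100
        + (M.toFun x111 + M.toFun x110 + M.toFun x011 + M.toFun x010)
        = M.toFun x111 + M.toFun x101 + M.toFun x011 + M.toFun x001 := by
      rw [← hS1, ← hS2, ← hS3]; exact heq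
    push_cast
    linear_combination (norm := module) (1/2 : ℂ) • heq'
  have key := M.extreme_pert hext m110 mF m001 dEF dEG dFG
    (by rw [abs_of_nonneg] <;> norm_num) (by rw [abs_of_nonneg] <;> norm_num) (by rw [abs_neg, abs_of_nonneg] <;> norm_num) htot
  have hME : M.toFun x110 = 0 := by
    have := key x110 m110
    rw [Set.inter_self, dEF.inter_eq, dEG.inter_eq, M.empty'] at this
    simpa using this
  have hMF : M.toFun (x100 ∪ x010 ∪ x111) = 0 := by
    have := key (x100 ∪ x010 ∪ x111) mF
    rw [Set.inter_comm _ x110, dEF.inter_eq, Set.inter_self, dFG.inter_eq, M.empty'] at this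
    simp only [smul_zero, zero_add, add_zero] at this
    have hne : ((1/2 : ℝ) : ℂ) ≠ 0 := by norm_num
    exact (smul_eq_zero.1 this).resolve_left hne
  have hsplit : S₁ \ S₃ = x110 ∪ x100 := by
    ext x
    simp only [hx110, hx100, Set.mem_diff, Set.mem_union, Set.mem_inter_iff,
      Set.mem_compl_iff]
    by_cases hx2 : x ∈ S₂ <;> tauto
  have hd : Disjoint x110 x100 := by
    refine Set.disjoint_left.2 fun x hx hx' => ?_
    simp only [hx110, hx100, Set.mem_inter_iff, Set.mem_compl_iff] at hx hx'
    tauto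
  have hx100z : M.toFun x100 = 0 :=
    M.null_mono m100 mF (fun x hx => Or.inl (Or.inl hx)) hMF
  rw [hsplit, M.add_of_disjoint m110 m100 hd, hME, hx100z, add_zero]

end POVM
namespace POVM

open Filter Topology

/-- Intersection of finitely many sets from a monotone `ℚ`-indexed family. -/
lemma biInter_monotone_eq {β : Type*} (g : ℚ → Set β)
    (hmono : ∀ {r s : ℚ}, r ≤ s → g r ⊆ g s) (q : ℕ → ℚ) (i : ℕ) :
    (⋂ j, ⋂ (_ : j ≤ i), g (q j))
      = g (((Finset.range (i + 1)).image q).min' (⟨q 0, Finset.mem_image_of_mem q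
        (Finset.mem_range.2 (Nat.succ_pos i))⟩)) := by
  set s := (Finset.range (i + 1)).image q
  set hne : s.Nonempty := ⟨q 0, Finset.mem_image_of_mem q (Finset.mem_range.2 (Nat.succ_pos i))⟩
  obtain ⟨j₀, hj₀mem, hj₀⟩ := Finset.mem_image.1 (s.min'_mem hne)
  apply le_antisymm
  · intro x hx
    rw [← hj₀]
    exact Set.mem_iInter.1 (Set.mem_iInter.1 hx j₀) (Nat.lt_succ_iff.1 (Finset.mem_range.1 hj₀mem))
  · intro x hx
    refine Set.mem_iInter.2 fun j => Set.mem_iInter.2 fun hj => ?_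
    exact hmono (s.min'_le (q j) (Finset.mem_image_of_mem q
      (Finset.mem_range.2 (Nat.lt_succ_iff.2 hj)))) hx

lemma exists_factor (M : POVM Ωb H) (hext : M.Extreme) (A : POVM ℝ H)
    (hA : RanSubset A M) :
    ∃ f : Ωb → ℝ, Measurable f ∧ ∀ S : Set ℝ, MeasurableSet S →
      M.toFun (f ⁻¹' S) = A.toFun S := by
  classical
  -- choose representing sets for the rays
  set Z : ℚ → Set Ωb := fun q => (hA (Set.Iic (q : ℝ)) measurableSet_Iic).choose with hZdef
  have hZmeas : ∀ q, MeasurableSet (Z q) := fun q =>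
    (hA (Set.Iic (q : ℝ)) measurableSet_Iic).choose_spec.1
  have hZval : ∀ q, M.toFun (Z q) = A.toFun (Set.Iic (q : ℝ)) := fun q =>
    (hA (Set.Iic (q : ℝ)) measurableSet_Iic).choose_spec.2
  -- monotonicity mod null
  have hnull : ∀ r q : ℚ, r ≤ q → M.toFun (Z r \ Z q) = 0 := by
    intro r q hrq
    obtain ⟨W, hWmeas, hWval⟩ := hA (Set.Ioc (r : ℝ) (q : ℝ)) measurableSet_Ioc
    have hadd : M.toFun (Z r) + M.toFun W = M.toFun (Z q) := by
      rw [hZval, hWval, hZval,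
        ← A.add_of_disjoint measurableSet_Iic measurableSet_Ioc (Set.Iic_disjoint_Ioc le_rfl),
        Set.Iic_union_Ioc_eq_Iic (by exact_mod_cast hrq)]
    exact M.extreme_null hext (hZmeas r) hWmeas (hZmeas q) hadd
  -- the monotone hull
  set Z' : ℚ → Set Ωb := fun q => ⋃ r : {r : ℚ // r ≤ q}, Z (r : ℚ) with hZ'def
  have hZ'meas : ∀ q, MeasurableSet (Z' q) := fun q =>
    MeasurableSet.iUnion fun r => hZmeas (r : ℚ)
  have hZ'mono : ∀ {r q : ℚ}, r ≤ q → Z' r ⊆ Z' q := by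
    intro r q hrq x hx
    rcases Set.mem_iUnion.1 hx with ⟨⟨t, ht⟩, hxt⟩
    exact Set.mem_iUnion.2 ⟨⟨t, ht.trans hrq⟩, hxt⟩
  have hZsub : ∀ q, Z q ⊆ Z' q := fun q =>
    Set.subset_iUnion (fun r : {r : ℚ // r ≤ q} => Z (r : ℚ)) ⟨q, le_rfl⟩
  -- scalar measures of `Z' q`
  have hmeasZ' : ∀ (φ : H) (q : ℚ), M.measure φ (Z' q) = A.measure φ (Set.Iic (q : ℝ)) := by
    intro φ q
    have hdiff : M.measure φ (Z' q \ Z q) = 0 := by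
      have hsub : Z' q \ Z q ⊆ ⋃ r : {r : ℚ // r ≤ q}, (Z (r : ℚ) \ Z q) := by
        rintro x ⟨hx, hxq⟩
        rcases Set.mem_iUnion.1 hx with ⟨r, hxr⟩
        exact Set.mem_iUnion.2 ⟨r, hxr, hxq⟩
      refine measure_mono_null hsub (measure_iUnion_null fun r => ?_)
      exact M.measure_of_null (hnull (r : ℚ) q r.2) ((hZmeas _).diff (hZmeas q)) φ
    have hle : M.measure φ (Z' q) ≤ M.measure φ (Z q) := by
      calc M.measure φ (Z' q) = M.measure φ (Z q ∪ (Z' q \ Z q)) := by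
            rw [Set.union_diff_cancel (hZsub q)]
        _ ≤ M.measure φ (Z q) + M.measure φ (Z' q \ Z q) := measure_union_le _ _
        _ = M.measure φ (Z q) := by rw [hdiff, add_zero]
    have heqq : M.measure φ (Z' q) = M.measure φ (Z q) :=
      le_antisymm hle (measure_mono (hZsub q))
    rw [heqq, M.measure_apply φ (hZmeas q), hZval q, ← A.measure_apply φ measurableSet_Iic]
  -- bad sets
  set L : Set Ωb := ⋂ q : ℚ, Z' q with hLdef
  set U : Set Ωb := ⋃ q : ℚ, Z' q with hUdef
  have hLmeas : MeasurableSet L := MeasurableSet.iInter fun q => hZ'meas q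
  have hUmeas : MeasurableSet U := MeasurableSet.iUnion fun q => hZ'meas q
  have hLnull : ∀ φ : H, M.measure φ L = 0 := by
    intro φ
    have hsub : L ⊆ ⋂ n : ℕ, Z' (-(n : ℚ)) :=
      Set.subset_iInter fun n => Set.iInter_subset _ (-(n : ℚ))
    refine measure_mono_null hsub ?_
    have hanti : Antitone fun n : ℕ => Z' (-(n : ℚ)) := fun m n hmn =>
      hZ'mono (neg_le_neg (by exact_mod_cast hmn))
    have ht1 := tendsto_measure_iInter_atTop (μ := M.measure φ)
      (fun n => (hZ'meas _).nullMeasurableSet) hanti ⟨0, measure_ne_top _ _⟩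
    have hanti2 : Antitone fun n : ℕ => Set.Iic ((-(n : ℚ) : ℚ) : ℝ) := fun m n hmn =>
      Set.Iic_subset_Iic.2 (by exact_mod_cast neg_le_neg (by exact_mod_cast hmn : (m : ℚ) ≤ n))
    have ht2 := tendsto_measure_iInter_atTop (μ := A.measure φ)
      (fun n => measurableSet_Iic.nullMeasurableSet) hanti2 ⟨0, measure_ne_top _ _⟩
    have hempty : (⋂ n : ℕ, Set.Iic ((-(n : ℚ) : ℚ) : ℝ)) = ∅ := by
      ext y
      simp only [Set.mem_iInter, Set.mem_Iic, Set.mem_empty_iff_false, iff_false, not_forall]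
      obtain ⟨n, hn⟩ := exists_nat_gt (-y)
      exact ⟨n, by push_cast; linarith⟩
    rw [hempty, measure_empty] at ht2
    have hvals : (fun n : ℕ => M.measure φ (Z' (-(n : ℚ))))
        = fun n : ℕ => A.measure φ (Set.Iic ((-(n : ℚ) : ℚ) : ℝ)) := funext fun n => hmeasZ' φ _
    have ht1' : Tendsto (fun n : ℕ => A.measure φ (Set.Iic ((-(n : ℚ) : ℚ) : ℝ))) atTop
        (nhds (M.measure φ (⋂ n : ℕ, Z' (-(n : ℚ))))) := by
      rw [← hvals]; exact ht1
    exact tendsto_nhds_unique ht1' ht2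
  have hUconull : ∀ φ : H, M.measure φ Uᶜ = 0 := by
    intro φ
    have hsub : (⋃ n : ℕ, Z' (n : ℚ))ᶜ ⊇ Uᶜ := by
      apply Set.compl_subset_compl.2
      exact Set.iUnion_subset fun n => Set.subset_iUnion (fun q : ℚ => Z' q) (n : ℚ)
    have hmono : Monotone fun n : ℕ => Z' (n : ℚ) := fun m n hmn =>
      hZ'mono (by exact_mod_cast hmn)
    have ht1 := tendsto_measure_iUnion_atTop (μ := M.measure φ) hmono
    have hmono2 : Monotone fun n : ℕ => Set.Iic ((n : ℚ) : ℝ) := fun m n hmn =>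
      Set.Iic_subset_Iic.2 (by exact_mod_cast hmn)
    have ht2 := tendsto_measure_iUnion_atTop (μ := A.measure φ) hmono2
    have huniv : (⋃ n : ℕ, Set.Iic ((n : ℚ) : ℝ)) = Set.univ := by
      ext y
      simp only [Set.mem_iUnion, Set.mem_Iic, Set.mem_univ, iff_true]
      obtain ⟨n, hn⟩ := exists_nat_gt y
      exact ⟨n, by push_cast; linarith⟩
    rw [huniv] at ht2
    have hvals : (fun n : ℕ => M.measure φ (Z' (n : ℚ)))
        = fun n : ℕ => A.measure φ (Set.Iic ((n : ℚ) : ℝ)) := funext fun n => hmeasZ' φ _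
    have ht1' : Tendsto (fun n : ℕ => A.measure φ (Set.Iic ((n : ℚ) : ℝ))) atTop
        (nhds (M.measure φ (⋃ n : ℕ, Z' (n : ℚ)))) := by
      rw [← hvals]; exact ht1
    have hUeq : M.measure φ (⋃ n : ℕ, Z' (n : ℚ)) = A.measure φ Set.univ :=
      tendsto_nhds_unique ht1' ht2
    have hsame : A.measure φ Set.univ = M.measure φ Set.univ := by
      rw [A.measure_apply φ MeasurableSet.univ, M.measure_apply φ MeasurableSet.univ,
        A.total', M.total']
    have hfull : M.measure φ (⋃ n : ℕ, Z' (n : ℚ)) = M.measure φ Set.univ := by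
      rw [hUeq, hsame]
    have : M.measure φ ((⋃ n : ℕ, Z' (n : ℚ))ᶜ) = 0 := by
      rw [measure_compl (MeasurableSet.iUnion fun n => hZ'meas _) (measure_ne_top _ _), hfull,
        tsub_self]
    exact measure_mono_null hsub this
  set Bad : Set Ωb := L ∪ Uᶜ with hBaddef
  have hBadmeas : MeasurableSet Bad := hLmeas.union hUmeas.compl
  have hBadnull : ∀ φ : H, M.measure φ Bad = 0 := fun φ =>
    measure_union_null (hLnull φ) (hUconull φ)
  -- the function
  set SS : Ωb → Set ℝ := fun ω => {y : ℝ | ∃ q : ℚ, ω ∈ Z' q ∧ (q : ℝ) = y} with hSSdef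
  set f : Ωb → ℝ := fun ω => if ω ∈ Bad then 0 else sInf (SS ω) with hfdef
  have hgood : ∀ ω, ω ∉ Bad → (ω ∈ U ∧ ω ∉ L) := by
    intro ω hω
    constructor
    · by_contra h
      exact hω (Or.inr h)
    · intro h
      exact hω (Or.inl h)
  have hne : ∀ ω, ω ∉ Bad → (SS ω).Nonempty := by
    intro ω hω
    obtain ⟨hU', -⟩ := hgood ω hω
    rcases Set.mem_iUnion.1 hU' with ⟨q, hq⟩
    exact ⟨(q : ℝ), q, hq, rfl⟩
  have hbdd : ∀ ω, ω ∉ Bad → BddBelow (SS ω) := by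
    intro ω hω
    obtain ⟨-, hL'⟩ := hgood ω hω
    have : ∃ q₀ : ℚ, ω ∉ Z' q₀ := by
      by_contra h
      push_neg at h
      exact hL' (Set.mem_iInter.2 h)
    obtain ⟨q₀, hq₀⟩ := this
    refine ⟨(q₀ : ℝ), ?_⟩
    rintro y ⟨r, hr, rfl⟩
    by_contra hlt
    push_neg at hlt
    have : r ≤ q₀ := by exact_mod_cast hlt.le
    exact hq₀ (hZ'mono this hr)
  have hkey : ∀ ω, ω ∉ Bad → ∀ x : ℝ, (f ω ≤ x ↔ ∀ q : ℚ, x < (q : ℝ) → ω ∈ Z' q) := by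
    intro ω hω x
    rw [hfdef]
    simp only [if_neg hω]
    constructor
    · intro hfx q hxq
      have : sInf (SS ω) < (q : ℝ) := lt_of_le_of_lt hfx hxq
      obtain ⟨y, hy, hyq⟩ := exists_lt_of_csInf_lt (hne ω hω) this
      obtain ⟨r, hr, rfl⟩ := hy
      have : r ≤ q := by exact_mod_cast hyq.le
      exact hZ'mono this hr
    · intro h
      by_contra hlt
      push_neg at hlt
      obtain ⟨q, hq1, hq2⟩ := exists_rat_btwn hlt
      have : sInf (SS ω) ≤ (q : ℝ) := csInf_le (hbdd ω hω) ⟨q, h q hq1, rfl⟩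
      exact absurd (this.trans_lt hq2) (lt_irrefl _)
  -- preimages of rays
  set T : ℝ → Set Ωb := fun x => ⋂ q : {q : ℚ // x < (q : ℝ)}, Z' (q : ℚ) with hTdef
  have hTmeas : ∀ x, MeasurableSet (T x) := fun x => MeasurableSet.iInter fun q => hZ'meas _
  have hmemT : ∀ x ω, ω ∈ T x ↔ ∀ q : ℚ, x < (q : ℝ) → ω ∈ Z' q := by
    intro x ω
    rw [hTdef]
    simp only [Set.mem_iInter, Subtype.forall]
  have hpre : ∀ x : ℝ, f ⁻¹' (Set.Iic x)
      = if 0 ≤ x then Bad ∪ (Badᶜ ∩ T x) else Badᶜ ∩ T x := by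
    intro x
    ext ω
    by_cases hω : ω ∈ Bad
    · have hfω : f ω = 0 := by rw [hfdef]; simp only [if_pos hω]
      by_cases h0 : 0 ≤ x
      · simp only [if_pos h0, Set.mem_preimage, Set.mem_Iic, hfω, Set.mem_union]
        exact ⟨fun _ => Or.inl hω, fun _ => h0⟩
      · simp only [if_neg h0, Set.mem_preimage, Set.mem_Iic, hfω, Set.mem_inter_iff,
          Set.mem_compl_iff]
        constructor
        · intro h; exact absurd h h0
        · rintro ⟨h, -⟩; exact absurd hω h
    · have hiff : f ω ≤ x ↔ ω ∈ T x := by rw [hkey ω hω x, hmemT]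
      by_cases h0 : 0 ≤ x
      · simp only [if_pos h0, Set.mem_preimage, Set.mem_Iic, Set.mem_union, Set.mem_inter_iff,
          Set.mem_compl_iff]
        constructor
        · intro h; exact Or.inr ⟨hω, hiff.1 h⟩
        · rintro (h | ⟨-, h⟩)
          · exact absurd h hω
          · exact hiff.2 h
      · simp only [if_neg h0, Set.mem_preimage, Set.mem_Iic, Set.mem_inter_iff,
          Set.mem_compl_iff]
        exact ⟨fun h => ⟨hω, hiff.1 h⟩, fun h => hiff.2 h.2⟩
  have hfmeas : Measurable f := by
    apply measurable_of_Iic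
    intro x
    rw [hpre x]
    split_ifs
    · exact hBadmeas.union (hBadmeas.compl.inter (hTmeas x))
    · exact hBadmeas.compl.inter (hTmeas x)
  -- measure of T x
  have hμT : ∀ (φ : H) (x : ℝ), M.measure φ (T x) = A.measure φ (Set.Iic x) := by
    intro φ x
    have hq : ∀ n : ℕ, ∃ q : ℚ, x < (q : ℝ) ∧ (q : ℝ) < x + 1 / (n + 1) := fun n =>
      exists_rat_btwn (by positivity |> fun h => lt_add_of_pos_right x h)
    choose q hq1 hq2 using hq
    -- identify the intersections
    have hTseq : (⋂ n : ℕ, Z' (q n)) = T x := by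
      apply le_antisymm
      · intro ω hω
        rw [hmemT]
        intro s hs
        obtain ⟨n, hn⟩ := exists_nat_one_div_lt (sub_pos.2 hs)
        have hqs : (q n : ℝ) < (s : ℝ) := by
          have := hq2 n
          have hn' : (1 : ℝ) / (n + 1) < (s : ℝ) - x := hn
          linarith
        exact hZ'mono (by exact_mod_cast hqs.le) (Set.mem_iInter.1 hω n)
      · intro ω hω
        refine Set.mem_iInter.2 fun n => ?_
        rw [hmemT] at hω
        exact hω (q n) (hq1 n)
    have hIseq : (⋂ n : ℕ, Set.Iic ((q n : ℚ) : ℝ)) = Set.Iic x := by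
      apply le_antisymm
      · intro y hy
        simp only [Set.mem_iInter, Set.mem_Iic] at hy ⊢
        by_contra hxy
        push_neg at hxy
        obtain ⟨n, hn⟩ := exists_nat_one_div_lt (sub_pos.2 hxy)
        have := hq2 n
        have := hy n
        have hn' : (1 : ℝ) / (n + 1) < y - x := hn
        linarith
      · intro y hy
        simp only [Set.mem_iInter, Set.mem_Iic] at hy ⊢
        exact fun n => hy.trans (hq1 n).le
    have ht1 := tendsto_measure_iInter_le (μ := M.measure φ) (f := fun n => Z' (q n))
      (fun n => (hZ'meas _).nullMeasurableSet) ⟨0, measure_ne_top _ _⟩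
    have ht2 := tendsto_measure_iInter_le (μ := A.measure φ)
      (f := fun n => Set.Iic ((q n : ℚ) : ℝ))
      (fun n => measurableSet_Iic.nullMeasurableSet) ⟨0, measure_ne_top _ _⟩
    have hvals : (fun i : ℕ => M.measure φ (⋂ j, ⋂ (_ : j ≤ i), Z' (q j)))
        = fun i : ℕ => A.measure φ (⋂ j, ⋂ (_ : j ≤ i), Set.Iic ((q j : ℚ) : ℝ)) := by
      funext i
      rw [biInter_monotone_eq Z' (fun h => hZ'mono h) q i,
        biInter_monotone_eq (fun r : ℚ => Set.Iic ((r : ℚ) : ℝ))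
          (fun h => Set.Iic_subset_Iic.2 (by exact_mod_cast h)) q i]
      exact hmeasZ' φ _
    rw [hvals] at ht1
    rw [hTseq] at ht1
    rw [hIseq] at ht2
    exact tendsto_nhds_unique ht1 ht2
  -- measure of the ray preimages
  have hμIic : ∀ (φ : H) (x : ℝ), M.measure φ (f ⁻¹' Set.Iic x) = A.measure φ (Set.Iic x) := by
    intro φ x
    have hTB : M.measure φ (Badᶜ ∩ T x) = M.measure φ (T x) := by
      have h1 : M.measure φ (T x ∩ Bad) + M.measure φ (T x \ Bad) = M.measure φ (T x) :=
        measure_inter_add_diff (T x) hBadmeas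
      have h2 : M.measure φ (T x ∩ Bad) = 0 :=
        measure_mono_null Set.inter_subset_right (hBadnull φ)
      rw [h2, zero_add] at h1
      rw [← h1, Set.diff_eq, Set.inter_comm]
    rw [hpre x]
    split_ifs
    · apply le_antisymm
      · calc M.measure φ (Bad ∪ (Badᶜ ∩ T x))
            ≤ M.measure φ Bad + M.measure φ (Badᶜ ∩ T x) := measure_union_le _ _
          _ = M.measure φ (T x) := by rw [hBadnull φ, zero_add, hTB]
          _ = A.measure φ (Set.Iic x) := hμT φ x
      · rw [← hμT φ x, ← hTB]
        exact measure_mono Set.subset_union_right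
    · rw [hTB]
      exact hμT φ x
  -- conclude via uniqueness of measures
  have hmap : ∀ φ : H, Measure.map f (M.measure φ) = A.measure φ := by
    intro φ
    have hfin : IsFiniteMeasure (Measure.map f (M.measure φ)) := by
      constructor
      rw [Measure.map_apply hfmeas MeasurableSet.univ, Set.preimage_univ]
      exact measure_lt_top _ _
    refine MeasureTheory.Measure.ext_of_Iic _ _ fun x => ?_
    rw [Measure.map_apply hfmeas measurableSet_Iic]
    exact hμIic φ x
  refine ⟨f, hfmeas, fun S hS => ?_⟩
  refine toFun_eq_of_measure (hfmeas hS) hS fun φ => ?_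
  rw [← hmap φ, Measure.map_apply hfmeas hS]

end POVM
namespace POVM

open scoped Classical in
/-- Pushforward of a POVM along a measurable map. -/
noncomputable def push (A : POVM Ω H) (e : Ω → Ω') (he : Measurable e) : POVM Ω' H where
  toFun := fun S => if MeasurableSet S then A.toFun (e ⁻¹' S) else 0
  isPositive' := fun S => by
    split_ifs
    · exact A.isPositive' _
    · exact ContinuousLinearMap.isPositive_zero
  empty' := by
    rw [if_pos MeasurableSet.empty, Set.preimage_empty, A.empty']
  total' := by
    rw [if_pos MeasurableSet.univ, Set.preimage_univ, A.total']
  not_measurable' := fun s hs => if_neg hs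
  m_iUnion' := by
    intro f hf hd x
    have hvals : ∀ n, (if MeasurableSet (f n) then A.toFun (e ⁻¹' f n) else 0)
        = A.toFun (e ⁻¹' f n) := fun n => if_pos (hf n)
    simp only [hvals, if_pos (MeasurableSet.iUnion hf), Set.preimage_iUnion]
    exact A.m_iUnion' (fun n => e ⁻¹' f n) (fun n => he (hf n))
      (fun i j hij => Disjoint.preimage e (hd hij)) x

lemma push_apply (A : POVM Ω H) (e : Ω → Ω') (he : Measurable e) {S : Set Ω'}
    (hS : MeasurableSet S) : (A.push e he).toFun S = A.toFun (e ⁻¹' S) := by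
  classical
  exact if_pos hS

end POVM

/-- Let `(Ω,Σ)` and `(Ω',Σ')` be standard Borel spaces, `A`, `B` POVMs on
them, and `M` an extreme POVM on a measurable space `(Ω̄,Σ̄)` (on a separable complex Hilbert
space).  If `ran A ∪ ran B ⊆ ran M` then `A` and `B` are jointly measurable. -/
theorem extreme_mother_implies_jointlyMeasurable
    [StandardBorelSpace Ω] [StandardBorelSpace Ω'] [TopologicalSpace.SeparableSpace H]
    (A : POVM Ω H) (B : POVM Ω' H) (M : POVM Ωb H) (hext : M.Extreme)
    (hA : RanSubset A M) (hB : RanSubset B M) :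
    JointlyMeasurable A B := by
  classical
  obtain ⟨e, he⟩ := MeasureTheory.exists_measurableEmbedding_real Ω
  obtain ⟨e', he'⟩ := MeasureTheory.exists_measurableEmbedding_real Ω'
  set A' : POVM ℝ H := A.push e he.measurable with hA'def
  set B' : POVM ℝ H := B.push e' he'.measurable with hB'def
  have hranA' : RanSubset A' M := by
    intro S hS
    rw [hA'def, POVM.push_apply A e he.measurable hS]
    exact hA _ (he.measurable hS)
  have hranB' : RanSubset B' M := by
    intro S hS
    rw [hB'def, POVM.push_apply B e' he'.measurable hS]
    exact hB _ (he'.measurable hS)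
  obtain ⟨f, hfmeas, hf⟩ := M.exists_factor hext A' hranA'
  obtain ⟨g, hgmeas, hg⟩ := M.exists_factor hext B' hranB'
  -- basic identities
  have hfA : ∀ {S : Set ℝ}, MeasurableSet S → M.toFun (f ⁻¹' S) = A.toFun (e ⁻¹' S) := by
    intro S hS
    rw [hf S hS, hA'def, POVM.push_apply A e he.measurable hS]
  have hgB : ∀ {S : Set ℝ}, MeasurableSet S → M.toFun (g ⁻¹' S) = B.toFun (e' ⁻¹' S) := by
    intro S hS
    rw [hg S hS, hB'def, POVM.push_apply B e' he'.measurable hS]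
  set F : Ωb → ℝ × ℝ := fun ω => (f ω, g ω) with hFdef
  have hFmeas : Measurable F := hfmeas.prodMk hgmeas
  have hee' : MeasurableEmbedding (Prod.map e e') := he.prodMap he'
  -- conull sets
  have hXconull : ∀ φ : H, M.measure φ (f ⁻¹' Set.range e)ᶜ = 0 := by
    intro φ
    have h0 : M.toFun (f ⁻¹' (Set.range e)ᶜ) = 0 := by
      rw [hfA he.measurableSet_range.compl]
      have : e ⁻¹' (Set.range e)ᶜ = ∅ := by
        ext x; simp [Set.mem_preimage, Set.mem_range]
      rw [this, A.empty']
    rw [← Set.preimage_compl]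
    exact POVM.measure_of_null h0 (hfmeas he.measurableSet_range.compl) φ
  have hYconull : ∀ φ : H, M.measure φ (g ⁻¹' Set.range e')ᶜ = 0 := by
    intro φ
    have h0 : M.toFun (g ⁻¹' (Set.range e')ᶜ) = 0 := by
      rw [hgB he'.measurableSet_range.compl]
      have : e' ⁻¹' (Set.range e')ᶜ = ∅ := by
        ext x; simp [Set.mem_preimage, Set.mem_range]
      rw [this, B.empty']
    rw [← Set.preimage_compl]
    exact POVM.measure_of_null h0 (hgmeas he'.measurableSet_range.compl) φ
  have hconull : ∀ (W C : Set Ωb), MeasurableSet C → (∀ φ : H, M.measure φ Cᶜ = 0) →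
      ∀ φ : H, M.measure φ (W ∩ C) = M.measure φ W := by
    intro W C hC hCc φ
    have h1 : M.measure φ (W ∩ C) + M.measure φ (W \ C) = M.measure φ W :=
      measure_inter_add_diff W hC
    have h2 : M.measure φ (W \ C) = 0 :=
      measure_mono_null (fun x hx => hx.2) (hCc φ)
    rw [h2, add_zero] at h1
    exact h1
  -- the joint observable
  refine ⟨{
    toFun := fun S => if MeasurableSet S then M.toFun (F ⁻¹' (Prod.map e e' '' S)) else 0
    isPositive' := fun S => by
      split_ifs
      · exact M.isPositive' _
      · exact ContinuousLinearMap.isPositive_zero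
    empty' := by rw [if_pos MeasurableSet.empty, Set.image_empty, Set.preimage_empty, M.empty']
    total' := ?_
    not_measurable' := fun s hs => if_neg hs
    m_iUnion' := ?_ }, ?_, ?_⟩
  · -- total
    rw [if_pos MeasurableSet.univ, Set.image_univ, Set.range_prodMap]
    have hpre : F ⁻¹' (Set.range e ×ˢ Set.range e')
        = (f ⁻¹' Set.range e) ∩ (g ⁻¹' Set.range e') := by
      ext ω; simp [hFdef, Set.mem_prod]
    rw [hpre, ← M.total']
    refine POVM.toFun_eq_of_measure
      ((hfmeas he.measurableSet_range).inter (hgmeas he'.measurableSet_range))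
      MeasurableSet.univ fun φ => ?_
    rw [hconull _ _ (hgmeas he'.measurableSet_range) hYconull φ]
    have h1 : M.measure φ (f ⁻¹' Set.range e) + M.measure φ (f ⁻¹' Set.range e)ᶜ
        = M.measure φ Set.univ := measure_add_measure_compl (hfmeas he.measurableSet_range)
    rw [hXconull φ, add_zero] at h1
    exact h1
  · -- iUnion
    intro S hS hd x
    have hvals : ∀ n, (if MeasurableSet (S n) then M.toFun (F ⁻¹' (Prod.map e e' '' S n)) else 0)
        = M.toFun (F ⁻¹' (Prod.map e e' '' S n)) := fun n => if_pos (hS n)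
    simp only [hvals, if_pos (MeasurableSet.iUnion hS), Set.image_iUnion, Set.preimage_iUnion]
    exact M.m_iUnion' _
      (fun n => hFmeas (hee'.measurableSet_image.2 (hS n)))
      (fun i j hij => Disjoint.preimage F ((Set.disjoint_image_iff hee'.injective).2 (hd hij)))
      x
  · -- marginal A
    intro X hX
    dsimp only
    rw [if_pos (hX.prod MeasurableSet.univ)]
    have himg : Prod.map e e' '' (X ×ˢ Set.univ) = (e '' X) ×ˢ Set.range e' := by
      ext ⟨p1, p2⟩
      constructor
      · rintro ⟨⟨a, b⟩, ⟨haX, -⟩, hab⟩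
        rw [Prod.map_apply] at hab
        injection hab with h1 h2
        exact ⟨⟨a, haX, h1⟩, ⟨b, h2⟩⟩
      · rintro ⟨⟨a, haX, ha⟩, ⟨b, hb⟩⟩
        exact ⟨(a, b), ⟨haX, trivial⟩, by rw [Prod.map_apply, ha, hb]⟩
    have hpre : F ⁻¹' ((e '' X) ×ˢ Set.range e')
        = (f ⁻¹' (e '' X)) ∩ (g ⁻¹' Set.range e') := by
      ext ω; simp [hFdef, Set.mem_prod]
    rw [himg, hpre]
    have hMX : M.toFun (f ⁻¹' (e '' X)) = A.toFun X := by
      rw [hfA (he.measurableSet_image.2 hX), Set.preimage_image_eq X he.injective]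
    refine POVM.toFun_eq_of_measure
      ((hfmeas (he.measurableSet_image.2 hX)).inter (hgmeas he'.measurableSet_range))
      hX fun φ => ?_
    rw [hconull _ _ (hgmeas he'.measurableSet_range) hYconull φ,
      M.measure_apply φ (hfmeas (he.measurableSet_image.2 hX)), hMX,
      ← A.measure_apply φ hX]
  · -- marginal B
    intro Y hY
    dsimp only
    rw [if_pos (MeasurableSet.univ.prod hY)]
    have himg : Prod.map e e' '' (Set.univ ×ˢ Y) = Set.range e ×ˢ (e' '' Y) := by
      ext ⟨p1, p2⟩
      constructor
      · rintro ⟨⟨a, b⟩, ⟨-, hbY⟩, hab⟩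
        rw [Prod.map_apply] at hab
        injection hab with h1 h2
        exact ⟨⟨a, h1⟩, ⟨b, hbY, h2⟩⟩
      · rintro ⟨⟨a, ha⟩, ⟨b, hbY, hb⟩⟩
        exact ⟨(a, b), ⟨trivial, hbY⟩, by rw [Prod.map_apply, ha, hb]⟩
    have hpre : F ⁻¹' (Set.range e ×ˢ (e' '' Y))
        = (g ⁻¹' (e' '' Y)) ∩ (f ⁻¹' Set.range e) := by
      ext ω; simp [hFdef, Set.mem_prod]; tauto
    rw [himg, hpre]
    have hMY : M.toFun (g ⁻¹' (e' '' Y)) = B.toFun Y := by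
      rw [hgB (he'.measurableSet_image.2 hY), Set.preimage_image_eq Y he'.injective]
    refine POVM.toFun_eq_of_measure
      ((hgmeas (he'.measurableSet_image.2 hY)).inter (hfmeas he.measurableSet_range))
      hY fun φ => ?_
    rw [hconull _ _ (hfmeas he.measurableSet_range) hXconull φ,
      M.measure_apply φ (hgmeas (he'.measurableSet_image.2 hY)), hMY,
      ← B.measure_apply φ hY]
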